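/- Let d_n denote the Taylor coefficients of 1/Γ(z+1) at z = 0, i.e., 1/Γ(z+1) = Σ_{n≥0} d_n z^n. Then for every ε ∈ (0,1), |d_n| = O(n^{−(1−ε)n}) as n → ∞. -/

import Mathlib

set_option maxHeartbeats 1000000

open Finset Filter Real

-- Lemma 1
lemma abs_one_add_le (u : ℂ) :
    ‖(1 + u)‖ ≤ Real.exp (u.re + (‖u‖)^2 / 2) := by
  have h1 : Complex.normSq (1 + u) = 1 + 2 * u.re + (‖u‖)^2 := by
    rw [Complex.sq_norm]
    simp [Complex.normSq_apply]
    ring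
  have h2 : (1 : ℝ) + 2 * u.re + (‖u‖)^2 ≤ Real.exp (2 * u.re + (‖u‖)^2) := by
    have := Real.add_one_le_exp (2 * u.re + (‖u‖)^2)
    linarith
  rw [Complex.norm_def, h1]
  calc Real.sqrt (1 + 2 * u.re + ‖u‖ ^ 2)
      ≤ Real.sqrt (Real.exp (2 * u.re + ‖u‖ ^ 2)) := Real.sqrt_le_sqrt h2
    _ = Real.exp (u.re + (‖u‖)^2 / 2) := by
        rw [← Real.exp_half]; ring_nf

-- Lemma 2 : lower bound for harmonic tail
lemma harm_lower (m : ℕ) (hm : 1 ≤ m) (n : ℕ) (hn : m ≤ n) :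
    Real.log n - Real.log m ≤ ∑ k ∈ Finset.Icc m n, (1 : ℝ) / k := by
  have key : ∀ N, m ≤ N → Real.log (N+1) - Real.log m ≤ ∑ k ∈ Finset.Icc m N, (1 : ℝ) / k := by
    intro N hN
    induction N, hN using Nat.le_induction with
    | base =>
      simp only [Finset.Icc_self, Finset.sum_singleton]
      have hm0 : (0:ℝ) < m := by exact_mod_cast hm
      have := Real.log_le_sub_one_of_pos (x := ((m:ℝ)+1)/m) (by positivity)
      rw [Real.log_div (by positivity) (by positivity)] at this
      have : Real.log ((m:ℝ)+1) - Real.log m ≤ ((m:ℝ)+1)/m - 1 := this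
      have heq : ((m:ℝ)+1)/m - 1 = 1/m := by field_simp; ring
      linarith [heq ▸ this]
    | succ N hN ih =>
      rw [Finset.sum_Icc_succ_top (by omega)]
      have hN0 : (0:ℝ) < (N:ℝ) + 1 := by positivity
      have h := Real.log_le_sub_one_of_pos (x := ((N:ℝ)+2)/((N:ℝ)+1)) (by positivity)
      rw [Real.log_div (by positivity) (by positivity)] at h
      have heq : ((N:ℝ)+2)/((N:ℝ)+1) - 1 = 1/((N:ℝ)+1) := by field_simp; ring
      push_cast
      push_cast at ih
      rw [heq] at h
      have harr : ((N:ℝ)+1+1) = (N:ℝ)+2 := by ring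
      rw [harr]
      linarith
  have hn0 : (0:ℝ) < n := by
    have : 1 ≤ n := le_trans hm hn
    exact_mod_cast this
  have h2 : Real.log n ≤ Real.log (n+1) := by
    apply Real.log_le_log hn0 (by linarith)
  linarith [key n hn]

-- Lemma 3 : upper bound for harmonic tail
lemma harm_upper (m : ℕ) (hm : 1 ≤ m) (n : ℕ) (hn : m ≤ n) :
    ∑ k ∈ Finset.Icc m n, (1 : ℝ) / k ≤ Real.log n - Real.log m + 1 := by
  induction n, hn using Nat.le_induction with
  | base =>
    simp only [Finset.Icc_self, Finset.sum_singleton]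
    have hm1 : (1:ℝ) ≤ m := by exact_mod_cast hm
    have : (1:ℝ)/m ≤ 1 := by
      rw [div_le_one (by linarith)]; linarith
    linarith
  | succ N hN ih =>
    rw [Finset.sum_Icc_succ_top (by omega)]
    have hN0 : (0:ℝ) < (N:ℝ) := by
      have : 1 ≤ N := le_trans hm hN
      exact_mod_cast this
    have h := Real.log_le_sub_one_of_pos (x := (N:ℝ)/((N:ℝ)+1)) (by positivity)
    rw [Real.log_div (by positivity) (by positivity)] at h
    have heq : (N:ℝ)/((N:ℝ)+1) - 1 = -(1/((N:ℝ)+1)) := by field_simp; ring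
    rw [heq] at h
    push_cast
    push_cast at ih
    linarith

-- Lemma 4 : sum of 1/k^2
lemma sq_sum_le (m : ℕ) (hm : 2 ≤ m) (n : ℕ) (hn : m ≤ n) :
    ∑ k ∈ Finset.Icc m n, (1 : ℝ) / (k:ℝ)^2 ≤ 1/((m:ℝ)-1) := by
  have key : ∀ N, m ≤ N → ∑ k ∈ Finset.Icc m N, (1 : ℝ) / (k:ℝ)^2 ≤ 1/((m:ℝ)-1) - 1/N := by
    intro N hN
    induction N, hN using Nat.le_induction with
    | base =>
      simp only [Finset.Icc_self, Finset.sum_singleton]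
      have hm2 : (2:ℝ) ≤ m := by exact_mod_cast hm
      rw [div_sub_div _ _ (by linarith) (by linarith), div_le_div_iff₀ (by positivity) (by nlinarith)]
      nlinarith
    | succ N hN ih =>
      rw [Finset.sum_Icc_succ_top (by omega)]
      have hN2 : (2:ℝ) ≤ (N:ℝ) := by
        have : 2 ≤ N := le_trans hm hN
        exact_mod_cast this
      have key2 : (1:ℝ)/((N:ℝ)+1)^2 ≤ 1/(N:ℝ) - 1/((N:ℝ)+1) := by
        rw [div_sub_div _ _ (by linarith) (by linarith), div_le_div_iff₀ (by positivity) (by nlinarith)]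
        nlinarith
      push_cast
      push_cast at ih
      linarith
  have hN0 : (0:ℝ) < (n:ℝ) := by
    have : 2 ≤ n := le_trans hm hn
    have : (2:ℝ) ≤ n := by exact_mod_cast this
    linarith
  have := key n hn
  have : (0:ℝ) < 1/n := by positivity
  linarith [key n hn]

noncomputable def Bnd (r : ℝ) : ℝ :=
  (2*r+2) ^ (r+1) * Real.exp (r * (Real.log (r+1) + 2))

lemma Bnd_pos (r : ℝ) (hr : 0 ≤ r) : 0 < Bnd r := by
  unfold Bnd
  positivity

lemma gammaSeqInv_le (z : ℂ) (r : ℝ) (hr : 2 ≤ r) (hz : ‖z‖ ≤ r)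
    (n : ℕ) (hn : ⌈r⌉₊ ≤ n) : ‖(Complex.GammaSeq z n)⁻¹‖ ≤ Bnd r := by
  set m := ⌈r⌉₊ with hm
  have hrm : r ≤ m := Nat.le_ceil r
  have hmr : (m:ℝ) ≤ r + 1 := (Nat.ceil_lt_add_one (by linarith)).le
  have hm2 : 2 ≤ m := by
    have : (2:ℝ) ≤ (m:ℝ) := le_trans hr hrm
    exact_mod_cast this
  have hn0 : 0 < n := by omega
  have hn0' : (0:ℝ) < n := by exact_mod_cast hn0
  -- norm formula
  have h1 : ‖(Complex.GammaSeq z n)⁻¹‖ =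
      (∏ j ∈ Finset.range (n+1), ‖(z + j)‖) /
        (((n:ℝ) ^ z.re) * (n.factorial : ℝ)) := by
    rw [Complex.GammaSeq, inv_div, norm_div, norm_mul]
    congr 1
    · rw [norm_prod]
    · congr 1
      · rw [← Complex.ofReal_natCast,
          Complex.norm_cpow_eq_rpow_re_of_pos hn0']
      · simp
  set S := ∑ k ∈ Finset.Icc m n, (1:ℝ)/k with hS
  set T := ∑ k ∈ Finset.Icc m n, (1:ℝ)/(k:ℝ)^2 with hT
  -- split the product
  have hsplit : (∏ j ∈ Finset.range (n+1), ‖(z + j)‖) =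
      (∏ j ∈ Finset.Ico 0 m, ‖(z + j)‖) *
      (∏ j ∈ Finset.Ico m (n+1), ‖(z + j)‖) := by
    rw [Finset.range_eq_Ico, ← Finset.prod_Ico_consecutive _ (Nat.zero_le m) (by omega)]
  have hP1 : (∏ j ∈ Finset.Ico 0 m, ‖(z + j)‖) ≤ (2*(m:ℝ))^m := by
    calc (∏ j ∈ Finset.Ico 0 m, ‖(z + j)‖)
        ≤ ∏ j ∈ Finset.Ico 0 m, (2*(m:ℝ)) := by
          apply Finset.prod_le_prod (fun _ _ => norm_nonneg _)
          intro j hj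
          have hj' : j < m := (Finset.mem_Ico.1 hj).2
          have hj'' : (j:ℝ) ≤ m := by exact_mod_cast hj'.le
          calc ‖(z + j)‖ ≤ ‖z‖ + ‖(j:ℂ)‖ := norm_add_le _ _
            _ ≤ r + j := by
                have habsj : ‖(j:ℂ)‖ = (j:ℝ) := Complex.norm_natCast j
                rw [habsj]
                exact add_le_add hz le_rfl
            _ ≤ 2*(m:ℝ) := by linarith
      _ = (2*(m:ℝ))^m := by
          rw [Finset.prod_const]
          congr 1
          simp
  have hP2 : (∏ j ∈ Finset.Ico m (n+1), ‖(z + j)‖) ≤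
      (∏ j ∈ Finset.Ico m (n+1), (j:ℝ)) * Real.exp (z.re * S + r^2/2 * T) := by
    calc (∏ j ∈ Finset.Ico m (n+1), ‖(z + j)‖)
        ≤ ∏ j ∈ Finset.Ico m (n+1),
            ((j:ℝ) * Real.exp (z.re * (1/j) + r^2/2 * (1/(j:ℝ)^2))) := by
          apply Finset.prod_le_prod (fun _ _ => norm_nonneg _)
          intro j hj
          have hjm : m ≤ j := (Finset.mem_Ico.1 hj).1
          have hj0 : (0:ℝ) < j := by
            have : 0 < j := by omega
            exact_mod_cast this
          have hfac : z + j = (j:ℂ) * (1 + z/j) := by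
            have hj0' : (j:ℂ) ≠ 0 := by
              exact_mod_cast Nat.cast_ne_zero.2 (by omega)
            field_simp
            ring
          rw [hfac, norm_mul]
          have habs : ‖(j:ℂ)‖ = (j:ℝ) := Complex.norm_natCast j
          rw [habs]
          apply mul_le_mul_of_nonneg_left _ hj0.le
          calc ‖(1 + z/j)‖
              ≤ Real.exp ((z/(j:ℂ)).re + (‖(z/j)‖)^2/2) := abs_one_add_le _
            _ ≤ Real.exp (z.re * (1/j) + r^2/2 * (1/(j:ℝ)^2)) := by
                apply Real.exp_le_exp.2
                have hre : (z/(j:ℂ)).re = z.re / j := by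
                  rw [← Complex.ofReal_natCast, Complex.div_ofReal_re]
                have habs2 : ‖(z/j)‖ = ‖z‖ / j := by
                  rw [norm_div, Complex.norm_natCast]
                rw [hre, habs2]
                have h2 : (‖z‖ / j)^2 ≤ r^2/(j:ℝ)^2 := by
                  rw [div_pow]
                  apply div_le_div_of_nonneg_right _ (by positivity)
                  · exact pow_le_pow_left₀ (norm_nonneg _) hz 2
                have : z.re / j = z.re * (1/j) := by ring
                rw [this]
                have heq2 : r^2/2 * (1/(j:ℝ)^2) = (r^2/(j:ℝ)^2)/2 := by ring
                rw [heq2]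
                linarith
      _ = (∏ j ∈ Finset.Ico m (n+1), (j:ℝ)) * Real.exp (z.re * S + r^2/2 * T) := by
          rw [Finset.prod_mul_distrib, ← Real.exp_sum]
          congr 2
          rw [Finset.sum_add_distrib, ← Finset.mul_sum, ← Finset.mul_sum,
            Finset.Ico_add_one_right_eq_Icc]
  have hP3 : (∏ j ∈ Finset.Ico m (n+1), (j:ℝ)) ≤ (n.factorial : ℝ) := by
    have hfac : (n.factorial : ℝ) = ∏ j ∈ Finset.Ico 1 (n+1), (j:ℝ) := by
      rw [← Finset.prod_Ico_id_eq_factorial]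
      push_cast
      rfl
    rw [hfac, ← Finset.prod_Ico_consecutive _ (by omega : 1 ≤ m) (by omega : m ≤ n+1)]
    apply le_mul_of_one_le_left (Finset.prod_nonneg (fun j _ => by positivity))
    calc (1:ℝ) = ∏ _j ∈ Finset.Ico 1 m, (1:ℝ) := by simp
      _ ≤ ∏ j ∈ Finset.Ico 1 m, (j:ℝ) := by
          apply Finset.prod_le_prod (fun _ _ => by norm_num)
          intro j hj
          exact_mod_cast (Finset.mem_Ico.1 hj).1
  -- sums
  have hm0 : (0:ℝ) < m := by positivity
  have hlogm : 0 ≤ Real.log m := Real.log_nonneg (by exact_mod_cast (by omega : 1 ≤ m))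
  have hSbound : |S - Real.log n| ≤ Real.log m + 1 := by
    have hlow := harm_lower m (by omega) n hn
    have hup := harm_upper m (by omega) n hn
    rw [abs_le]
    constructor <;> [linarith; linarith]
  have hTbound : T ≤ 1/((m:ℝ)-1) := sq_sum_le m hm2 n hn
  -- exponent bound
  have hre_le : |z.re| ≤ r := le_trans (Complex.abs_re_le_norm z) hz
  have hexp : z.re * S + r^2/2 * T - z.re * Real.log n ≤ r * (Real.log m + 1) + r := by
    have h1' : z.re * (S - Real.log n) ≤ r * (Real.log m + 1) := by
      calc z.re * (S - Real.log n) ≤ |z.re * (S - Real.log n)| := le_abs_self _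
        _ = |z.re| * |S - Real.log n| := abs_mul _ _
        _ ≤ r * (Real.log m + 1) := by
            apply mul_le_mul hre_le hSbound (abs_nonneg _) (by linarith)
    have h2' : r^2/2 * T ≤ r := by
      have hm1 : (1:ℝ) ≤ (m:ℝ) - 1 := by linarith
      have hT0 : T ≤ 1/((m:ℝ)-1) := hTbound
      have : r^2/2 * (1/((m:ℝ)-1)) ≤ r := by
        rw [mul_one_div, div_le_iff₀ (by linarith)]
        nlinarith
      nlinarith [sq_nonneg r]
    nlinarith [h1', h2']
  -- final assembly
  rw [h1, hsplit]
  have hnpow : (n:ℝ) ^ z.re = Real.exp (z.re * Real.log n) := by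
    rw [Real.rpow_def_of_pos hn0', mul_comm]
  have hfacpos : (0:ℝ) < (n.factorial : ℝ) := by positivity
  have hnpowpos : (0:ℝ) < (n:ℝ) ^ z.re := Real.rpow_pos_of_pos hn0' _
  calc (∏ j ∈ Finset.Ico 0 m, ‖(z + j)‖) *
        (∏ j ∈ Finset.Ico m (n+1), ‖(z + j)‖) /
        ((n:ℝ) ^ z.re * (n.factorial : ℝ))
      ≤ (2*(m:ℝ))^m * ((n.factorial : ℝ) * Real.exp (z.re * S + r^2/2 * T)) /
        ((n:ℝ) ^ z.re * (n.factorial : ℝ)) := by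
        apply (div_le_div_iff_of_pos_right (by positivity)).2
        exact mul_le_mul hP1
          (le_trans hP2 (mul_le_mul_of_nonneg_right hP3 (Real.exp_nonneg _)))
          (Finset.prod_nonneg (fun _ _ => norm_nonneg _)) (by positivity)
    _ = (2*(m:ℝ))^m * Real.exp (z.re * S + r^2/2 * T - z.re * Real.log n) := by
        rw [hnpow, Real.exp_sub]
        field_simp
    _ ≤ (2*(m:ℝ))^m * Real.exp (r * (Real.log m + 1) + r) := by
        apply mul_le_mul_of_nonneg_left (Real.exp_le_exp.2 hexp) (by positivity)
    _ ≤ Bnd r := by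
        unfold Bnd
        apply mul_le_mul
        · calc (2*(m:ℝ))^m ≤ (2*r+2)^m := by
                apply pow_le_pow_left₀ (by positivity) (by linarith)
            _ = (2*r+2) ^ ((m:ℕ):ℝ) := by rw [Real.rpow_natCast]
            _ ≤ (2*r+2) ^ (r+1) := by
                apply Real.rpow_le_rpow_of_exponent_le (by linarith) hmr
        · apply Real.exp_le_exp.2
          have hlog : Real.log m ≤ Real.log (r+1) := Real.log_le_log hm0 hmr
          nlinarith [hlog]
        · positivity
        · positivity

lemma inv_gamma_le (z : ℂ) (r : ℝ) (hr : 2 ≤ r) (hz : ‖z‖ ≤ r) :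
    ‖(Complex.Gamma z)⁻¹‖ ≤ Bnd r := by
  by_cases hΓ : Complex.Gamma z = 0
  · rw [hΓ, inv_zero, norm_zero]
    exact (Bnd_pos r (by linarith)).le
  · have ht : Filter.Tendsto (fun n => ‖(Complex.GammaSeq z n)⁻¹‖) Filter.atTop
        (nhds ‖(Complex.Gamma z)⁻¹‖) :=
      (((Complex.GammaSeq_tendsto_Gamma z).inv₀ hΓ)).norm
    exact le_of_tendsto ht (Filter.eventually_atTop.2
      ⟨⌈r⌉₊, fun n hn => gammaSeqInv_le z r hr hz n hn⟩)

lemma coeff_bound (d : ℕ → ℂ) (f : ℂ → ℂ) (hf : Differentiable ℂ f)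
    (hq : HasFPowerSeriesAt f (FormalMultilinearSeries.ofScalars ℂ d) 0)
    (R : NNReal) (hR : 0 < R) (M : ℝ)
    (hM : ∀ θ : ℝ, ‖f (circleMap 0 R θ)‖ ≤ M) (n : ℕ) :
    ‖(d n)‖ ≤ M * ((R:ℝ)⁻¹)^n := by
  have hp : HasFPowerSeriesAt f (cauchyPowerSeries f 0 R) 0 :=
    (hf.hasFPowerSeriesOnBall (0:ℂ) hR).hasFPowerSeriesAt
  have heq := hq.eq_formalMultilinearSeries hp
  have hd : d n = (FormalMultilinearSeries.ofScalars ℂ d n) (fun _ => (1:ℂ)) := by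
    rw [FormalMultilinearSeries.ofScalars_apply_eq]
    simp
  have h1 : ‖(d n)‖ ≤ ‖cauchyPowerSeries f 0 R n‖ := by
    rw [hd, heq]
    calc ‖(cauchyPowerSeries f 0 R n) (fun _ => (1:ℂ))‖
        ≤ ‖cauchyPowerSeries f 0 R n‖ * ∏ _i : Fin n, ‖(1:ℂ)‖ :=
          (cauchyPowerSeries f 0 R n).le_opNorm _
      _ = ‖cauchyPowerSeries f 0 R n‖ := by simp
  have h2 := norm_cauchyPowerSeries_le f 0 R n
  have h3 : (∫ θ : ℝ in (0)..2*Real.pi, ‖f (circleMap 0 R θ)‖) ≤ 2*Real.pi*M := by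
    calc (∫ θ : ℝ in (0)..2*Real.pi, ‖f (circleMap 0 R θ)‖)
        ≤ ∫ _θ : ℝ in (0)..2*Real.pi, M := by
          apply intervalIntegral.integral_mono_on Real.two_pi_pos.le
          · exact ((hf.continuous.comp (continuous_circleMap 0 R)).norm).intervalIntegrable _ _
          · exact intervalIntegrable_const
          · exact fun θ _ => hM θ
      _ = 2*Real.pi*M := by simp [mul_comm]
  have hMnn : 0 ≤ M := le_trans (norm_nonneg _) (hM 0)
  calc ‖(d n)‖ ≤ ‖cauchyPowerSeries f 0 R n‖ := h1
    _ ≤ (2*Real.pi)⁻¹ * (∫ θ : ℝ in (0)..2*Real.pi, ‖f (circleMap 0 R θ)‖) * |(R:ℝ)|⁻¹^n := h2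
    _ ≤ (2*Real.pi)⁻¹ * (2*Real.pi*M) * |(R:ℝ)|⁻¹^n := by
        apply mul_le_mul_of_nonneg_right _ (by positivity)
        exact mul_le_mul_of_nonneg_left h3 (by positivity)
    _ = M * ((R:ℝ)⁻¹)^n := by
        rw [abs_of_nonneg (R.coe_nonneg)]
        field_simp

/-- If `d_n` are the Taylor coefficients of the entire function `1/Γ(z+1)`, i.e.
`Σₙ d_n zⁿ = 1/Γ(z+1)` for all `z`, then for every `ε ∈ (0,1)` one has
`|d_n| = O(n^{−(1−ε)n})` as `n → ∞`. -/
theorem stmt13 (d : ℕ → ℂ)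
    (hd : ∀ z : ℂ, HasSum (fun n : ℕ => d n * z ^ n) (1 / Complex.Gamma (z + 1)))
    (ε : ℝ) (hε0 : 0 < ε) (hε1 : ε < 1) :
    (fun n : ℕ => ‖(d n)‖) =O[Filter.atTop]
      (fun n : ℕ => (n : ℝ) ^ (-(1 - ε) * n)) := by
  set f : ℂ → ℂ := fun z => (Complex.Gamma (z+1))⁻¹ with hf_def
  have hd' : ∀ z : ℂ, HasSum (fun n => d n * z ^ n) (f z) := by
    intro z
    simpa [hf_def, one_div] using hd z
  have hdiff : Differentiable ℂ f :=
    Complex.differentiable_one_div_Gamma.comp (differentiable_id.add_const 1)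
  have hq : HasFPowerSeriesAt f (FormalMultilinearSeries.ofScalars ℂ d) 0 := by
    refine ⟨1, ?_, one_pos, ?_⟩
    · apply FormalMultilinearSeries.le_radius_of_tendsto (l := 0) (r := 1)
      have h0 : Filter.Tendsto (fun n => ‖d n * (1:ℂ)^n‖) Filter.atTop (nhds 0) := by
        simpa using ((hd' 1).summable.tendsto_atTop_zero).norm
      simp only [one_pow, mul_one, NNReal.coe_one]
      have heq : (fun n => ‖FormalMultilinearSeries.ofScalars ℂ d n‖)
          = fun n => ‖d n * (1:ℂ)^n‖ := by
        funext n
        rw [FormalMultilinearSeries.ofScalars_norm]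
        simp
      rw [heq]
      exact h0
    · intro y _
      have := hd' y
      simp only [FormalMultilinearSeries.ofScalars_apply_eq, smul_eq_mul, zero_add]
      exact this
  rw [Asymptotics.isBigO_iff]
  refine ⟨1, ?_⟩
  set a : ℝ := 1 - ε/2 with ha_def
  have ha0 : 0 < a := by rw [ha_def]; linarith
  have ha1 : a < 1 := by rw [ha_def]; linarith
  have htt : Filter.Tendsto (fun n : ℕ => (n:ℝ)^(a-1)) Filter.atTop (nhds 0) := by
    have h1 : Filter.Tendsto (fun x : ℝ => x^(-(1-a))) Filter.atTop (nhds 0) :=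
      tendsto_rpow_neg_atTop (by linarith)
    have h2 := h1.comp (tendsto_natCast_atTop_atTop (R := ℝ))
    have heq : (fun n : ℕ => (n:ℝ)^(a-1)) = (fun x : ℝ => x^(-(1-a))) ∘ (Nat.cast : ℕ → ℝ) := by
      funext n
      simp only [Function.comp]
      congr 1
      ring
    rw [heq]
    exact h2
  have hev1 : ∀ᶠ n : ℕ in Filter.atTop, (n:ℝ)^(a-1) < ε/48 :=
    htt.eventually (gt_mem_nhds (by positivity))
  filter_upwards [hev1, Filter.eventually_ge_atTop 2] with n h48 hn2
  have hn0 : (0:ℝ) < n := by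
    have : (2:ℝ) ≤ n := by exact_mod_cast hn2
    linarith
  set L := Real.log n with hL_def
  have hL2 : Real.log 2 ≤ L := Real.log_le_log (by norm_num) (by exact_mod_cast hn2)
  have hlog2 : (0.6931471803:ℝ) < Real.log 2 := Real.log_two_gt_d9
  have hLpos : 0 < L := by linarith
  set R : ℝ := (n:ℝ)^a with hR_def
  have hR1 : 1 ≤ R := by
    rw [hR_def, ← Real.rpow_zero (n:ℝ)]
    apply Real.rpow_le_rpow_of_exponent_le (by exact_mod_cast (by omega : 1 ≤ n)) ha0.le
  have hRpos : (0:ℝ) < R := by linarith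
  set Rn : NNReal := Real.toNNReal R with hRn_def
  have hRn : (Rn:ℝ) = R := Real.coe_toNNReal _ hRpos.le
  have hRnpos : 0 < Rn := by
    rw [hRn_def]
    exact Real.toNNReal_pos.2 hRpos
  have hM : ∀ θ : ℝ, ‖f (circleMap 0 (Rn:ℝ) θ)‖ ≤ Bnd (R+1) := by
    intro θ
    apply inv_gamma_le _ _ (by linarith)
    calc ‖(circleMap 0 (Rn:ℝ) θ + 1)‖
        ≤ ‖(circleMap 0 (Rn:ℝ) θ)‖ + ‖1‖ := norm_add_le _ _
      _ = |(Rn:ℝ)| + 1 := by rw [norm_circleMap_zero]; simp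
      _ = R + 1 := by rw [hRn, abs_of_pos hRpos]
  have hcb := coeff_bound d f hdiff hq Rn hRnpos (Bnd (R+1)) hM n
  rw [hRn] at hcb
  -- rewrite everything as exponentials
  have hRL : Real.log R = a * L := Real.log_rpow hn0 a
  have hRinv : (R⁻¹)^n = Real.exp (-(a*L) * n) := by
    have : R⁻¹ = Real.exp (-(a*L)) := by
      rw [← hRL, Real.exp_neg, Real.exp_log hRpos]
    rw [this, ← Real.exp_nat_mul]
    ring_nf
  set E : ℝ := Real.log (2*(R+1)+2) * ((R+1)+1) + (R+1) * (Real.log ((R+1)+1) + 2) with hE_def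
  have hBnd : Bnd (R+1) = Real.exp E := by
    rw [Bnd, Real.rpow_def_of_pos (by linarith), ← Real.exp_add]
  -- bound E
  have hlogR : Real.log R ≤ L := by
    rw [hRL]
    nlinarith
  have hlog6R : Real.log (2*(R+1)+2) ≤ 4*L := by
    have h1 : Real.log (2*(R+1)+2) ≤ Real.log (6*R) :=
      Real.log_le_log (by linarith) (by linarith)
    have h2 : Real.log (6*R) = Real.log 6 + Real.log R :=
      Real.log_mul (by norm_num) (by linarith)
    have h3 : Real.log 6 ≤ 3 * Real.log 2 := by
      have : Real.log 6 ≤ Real.log 8 := Real.log_le_log (by norm_num) (by norm_num)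
      have h8 : Real.log 8 = 3 * Real.log 2 := by
        rw [show (8:ℝ) = 2^3 by norm_num, Real.log_pow]
        push_cast
        ring
      linarith
    nlinarith
  have hlog3R : Real.log ((R+1)+1) ≤ 3*L := by
    have h1 : Real.log ((R+1)+1) ≤ Real.log (3*R) :=
      Real.log_le_log (by linarith) (by linarith)
    have h2 : Real.log (3*R) = Real.log 3 + Real.log R :=
      Real.log_mul (by norm_num) (by linarith)
    have h3 : Real.log 3 ≤ 2 * Real.log 2 := by
      have : Real.log 3 ≤ Real.log 4 := Real.log_le_log (by norm_num) (by norm_num)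
      have h4 : Real.log 4 = 2 * Real.log 2 := by
        rw [show (4:ℝ) = 2^2 by norm_num, Real.log_pow]
        push_cast
        ring
      linarith
    nlinarith
  have h2le : (2:ℝ) ≤ 3*L := by nlinarith
  have hE_le : E ≤ 24 * R * L := by
    rw [hE_def]
    have hb1 : (R+1)+1 ≤ 3*R := by linarith
    have hb2 : R+1 ≤ 2*R := by linarith
    have hlogpos : 0 ≤ Real.log (2*(R+1)+2) := Real.log_nonneg (by linarith)
    have hlogpos2 : 0 ≤ Real.log ((R+1)+1) := Real.log_nonneg (by linarith)
    nlinarith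
  have hRn48 : 48 * R ≤ ε * n := by
    have hfact : (n:ℝ)^(a-1) * (n:ℝ) = R := by
      rw [hR_def, ← Real.rpow_add_one hn0.ne' (a-1)]
      ring_nf
    have := mul_le_mul_of_nonneg_right h48.le hn0.le
    rw [hfact] at this
    nlinarith
  -- final chain
  have hfinal : Bnd (R+1) * (R⁻¹)^n ≤ (n:ℝ) ^ (-(1-ε) * n) := by
    rw [hBnd, hRinv, ← Real.exp_add, Real.rpow_def_of_pos hn0]
    apply Real.exp_le_exp.2
    have h1 : E ≤ (ε/2) * (n * L) := by nlinarith
    have h2 : Real.log (n:ℝ) * (-(1-ε) * n) = -(1-ε) * (n * L) := by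
      rw [hL_def]; ring
    rw [h2]
    have h3 : -(a*L) * n = -(a * (n * L)) := by ring
    rw [h3]
    have hnL : 0 ≤ (n:ℝ) * L := by positivity
    rw [ha_def]
    nlinarith
  have hrpos : (0:ℝ) < (n:ℝ) ^ (-(1-ε) * n) := Real.rpow_pos_of_pos hn0 _
  rw [Real.norm_eq_abs, Real.norm_eq_abs, abs_of_nonneg (norm_nonneg _),
    abs_of_pos hrpos, one_mul]
  exact le_trans hcb hfinal
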